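/- For positive definite n×n matrices A and vectors ξ ∈ ℂⁿ, the map (A, ξ) ↦ ⟨ξ, A⁻¹ ξ⟩ is jointly convex: for positive definite A₁, A₂, vectors ξ₁, ξ₂, and λ ∈ [0,1], ⟨λξ₁+(1-λ)ξ₂, (λA₁+(1-λ)A₂)⁻¹ (λξ₁+(1-λ)ξ₂)⟩ ≤ λ⟨ξ₁, A₁⁻¹ξ₁⟩ + (1-λ)⟨ξ₂, A₂⁻¹ξ₂⟩. -/

import Mathlib

open Matrix ComplexOrder

private lemma key_ineq {n : ℕ} {B : Matrix (Fin n) (Fin n) ℂ} (hB : B.PosDef) (ξ η : Fin n → ℂ) :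
    2 * (star η ⬝ᵥ ξ).re - (star η ⬝ᵥ (B *ᵥ η)).re ≤ (star ξ ⬝ᵥ (B⁻¹ *ᵥ ξ)).re := by
  have hdet : IsUnit B.det := (isUnit_iff_isUnit_det B).mp hB.isUnit
  obtain ⟨u, hBu⟩ : ∃ u, B *ᵥ u = ξ :=
    ⟨B⁻¹ *ᵥ ξ, by rw [mulVec_mulVec, mul_nonsing_inv _ hdet, one_mulVec]⟩
  have hinv : B⁻¹ *ᵥ ξ = u := by
    rw [← hBu, mulVec_mulVec, nonsing_inv_mul _ hdet, one_mulVec]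
  have h0 : 0 ≤ RCLike.re (star (η - u) ⬝ᵥ (B *ᵥ (η - u))) :=
    hB.posSemidef.re_dotProduct_nonneg _
  have hswap : ∀ v w : Fin n → ℂ, (star v ⬝ᵥ w).re = (star w ⬝ᵥ v).re := by
    intro v w
    have h : star (star w ⬝ᵥ v) = star v ⬝ᵥ w := by rw [star_dotProduct]; simp
    rw [← h, Complex.star_def, Complex.conj_re]
  have huξ : (star u ⬝ᵥ ξ).re = (star ξ ⬝ᵥ u).re := hswap u ξ
  have huBη : (star u ⬝ᵥ (B *ᵥ η)).re = (star η ⬝ᵥ ξ).re := by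
    have h1 : star u ᵥ* B = star ξ := by
      rw [← hBu, star_mulVec, hB.isHermitian.eq]
    rw [dotProduct_mulVec, h1, hswap ξ η]
  have hexp : star (η - u) ⬝ᵥ (B *ᵥ (η - u)) =
      star η ⬝ᵥ (B *ᵥ η) - star η ⬝ᵥ ξ - star u ⬝ᵥ (B *ᵥ η) + star u ⬝ᵥ ξ := by
    rw [mulVec_sub, hBu]
    simp only [star_sub, sub_dotProduct, dotProduct_sub]
    ring
  rw [hexp] at h0
  simp only [RCLike.re_to_complex, Complex.sub_re, Complex.add_re] at h0
  rw [huξ, huBη] at h0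
  rw [hinv]
  linarith

private lemma comb_posdef {n : ℕ} {A₁ A₂ : Matrix (Fin n) (Fin n) ℂ}
    (hA₁ : A₁.PosDef) (hA₂ : A₂.PosDef) {l : ℝ} (hl0 : 0 ≤ l) (hl1 : l ≤ 1) :
    (l • A₁ + (1 - l) • A₂).PosDef := by
  refine PosDef.of_dotProduct_mulVec_pos ?_ ?_
  · have h1 : (l • A₁)ᴴ = l • A₁ := by
      rw [conjTranspose_smul, hA₁.isHermitian.eq]; simp
    have h2 : ((1 - l) • A₂)ᴴ = (1 - l) • A₂ := by
      rw [conjTranspose_smul, hA₂.isHermitian.eq]; simp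
    unfold Matrix.IsHermitian
    rw [conjTranspose_add, h1, h2]
  · intro x hx
    have e : star x ⬝ᵥ ((l • A₁ + (1 - l) • A₂) *ᵥ x) =
        (l : ℂ) * (star x ⬝ᵥ (A₁ *ᵥ x)) + ((1 - l : ℝ) : ℂ) * (star x ⬝ᵥ (A₂ *ᵥ x)) := by
      rw [add_mulVec, dotProduct_add, smul_mulVec, smul_mulVec,
        dotProduct_smul, dotProduct_smul]
      simp [Complex.real_smul]
    rw [e]
    rcases lt_or_eq_of_le hl1 with h | h
    · have hpos : 0 < ((1 - l : ℝ) : ℂ) * (star x ⬝ᵥ (A₂ *ᵥ x)) := by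
        apply mul_pos _ (hA₂.dotProduct_mulVec_pos hx)
        rw [Complex.zero_lt_real]; linarith
      have hnn : 0 ≤ (l : ℂ) * (star x ⬝ᵥ (A₁ *ᵥ x)) := by
        apply mul_nonneg _ (le_of_lt (hA₁.dotProduct_mulVec_pos hx))
        rw [Complex.zero_le_real]; exact hl0
      exact add_pos_of_nonneg_of_pos hnn hpos
    · subst h
      simpa using hA₁.dotProduct_mulVec_pos hx

/-- Joint convexity of `(A, ξ) ↦ ⟨ξ, A⁻¹ ξ⟩` for positive definite matrices `A`
and vectors `ξ ∈ ℂⁿ`. -/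
theorem jointly_convex_inner_inv {n : ℕ} (A₁ A₂ : Matrix (Fin n) (Fin n) ℂ)
    (hA₁ : A₁.PosDef) (hA₂ : A₂.PosDef) (ξ₁ ξ₂ : Fin n → ℂ)
    (l : ℝ) (hl0 : 0 ≤ l) (hl1 : l ≤ 1) :
    (star (l • ξ₁ + (1 - l) • ξ₂) ⬝ᵥ
        ((l • A₁ + (1 - l) • A₂)⁻¹ *ᵥ (l • ξ₁ + (1 - l) • ξ₂))).re ≤
      l * (star ξ₁ ⬝ᵥ (A₁⁻¹ *ᵥ ξ₁)).re + (1 - l) * (star ξ₂ ⬝ᵥ (A₂⁻¹ *ᵥ ξ₂)).re := by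
  have hA : (l • A₁ + (1 - l) • A₂).PosDef := comb_posdef hA₁ hA₂ hl0 hl1
  set A := l • A₁ + (1 - l) • A₂ with hAdef
  set ξc := l • ξ₁ + (1 - l) • ξ₂ with hξc
  have hdet : IsUnit A.det := (isUnit_iff_isUnit_det A).mp hA.isUnit
  set η := A⁻¹ *ᵥ ξc with hη
  have hAη : A *ᵥ η = ξc := by
    rw [hη, mulVec_mulVec, mul_nonsing_inv _ hdet, one_mulVec]
  have hswap : ∀ v w : Fin n → ℂ, (star v ⬝ᵥ w).re = (star w ⬝ᵥ v).re := by
    intro v w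
    have h : star (star w ⬝ᵥ v) = star v ⬝ᵥ w := by rw [star_dotProduct]; simp
    rw [← h, Complex.star_def, Complex.conj_re]
  have hLHS : (star ξc ⬝ᵥ η).re =
      2 * (star η ⬝ᵥ ξc).re - (star η ⬝ᵥ (A *ᵥ η)).re := by
    rw [hAη, hswap ξc η]; ring
  have hlin1 : (star η ⬝ᵥ ξc).re =
      l * (star η ⬝ᵥ ξ₁).re + (1 - l) * (star η ⬝ᵥ ξ₂).re := by
    rw [hξc]
    simp [dotProduct_add, dotProduct_smul, Complex.real_smul, Complex.add_re,
      Complex.mul_re, Complex.ofReal_re, Complex.ofReal_im]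
  have hlin2 : (star η ⬝ᵥ (A *ᵥ η)).re =
      l * (star η ⬝ᵥ (A₁ *ᵥ η)).re + (1 - l) * (star η ⬝ᵥ (A₂ *ᵥ η)).re := by
    rw [hAdef, add_mulVec, smul_mulVec, smul_mulVec]
    simp [dotProduct_add, dotProduct_smul, Complex.real_smul, Complex.add_re,
      Complex.mul_re, Complex.ofReal_re, Complex.ofReal_im]
  have k1 := key_ineq hA₁ ξ₁ η
  have k2 := key_ineq hA₂ ξ₂ η
  have k1' := mul_le_mul_of_nonneg_left k1 hl0
  have k2' := mul_le_mul_of_nonneg_left k2 (by linarith : (0:ℝ) ≤ 1 - l)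
  rw [hLHS, hlin1, hlin2]
  nlinarith [k1', k2']
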